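/- For positive integers i < j and k ≥ 1, the cloning of the interval-reversal permutation r_{i,j} is given by: ς_k(r_{i,j}) = r_{i+1,j+1} if k < i; ς_k(r_{i,j}) = r_{i,j+1} ∘ r_{k,k+1} if i ≤ k ≤ j (where r_{k,k+1} is the transposition of k and k+1, and composition is (g∘h)(m) = g(h(m))); and ς_k(r_{i,j}) = r_{i,j} if k > j. -/

import Mathlib

/-- The interval reversal `r_{i,j}` of the positive integers: `m ↦ i + j − m` for
`i ≤ m ≤ j`, identity otherwise. -/
def rrev (i j : ℕ+) : ℕ+ → ℕ+ := fun m =>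
  if i ≤ m ∧ m ≤ j then i + j - m else m

/-- The `k`-th cloning map on maps of the positive integers:
`ς_k(g)(m) = g(m)` if `m ≤ k` and `g(m) ≤ g(k)`; `g(m)+1` if `m < k` and `g(m) > g(k)`;
`g(m−1)` if `m > k` and `g(m−1) < g(k)`; `g(m−1)+1` if `m > k` and `g(m−1) ≥ g(k)`. -/
def clone (k : ℕ+) (g : ℕ+ → ℕ+) : ℕ+ → ℕ+ := fun m =>
  if m ≤ k then (if g m ≤ g k then g m else g m + 1)
  else (if g (m - 1) < g k then g (m - 1) else g (m - 1) + 1)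

lemma rrev_coe (i j m : ℕ+) :
    ((rrev i j m : ℕ)) = if (i:ℕ) ≤ (m:ℕ) ∧ (m:ℕ) ≤ (j:ℕ) then (i:ℕ) + (j:ℕ) - (m:ℕ) else (m:ℕ) := by
  have hi : 0 < (i:ℕ) := i.2
  simp only [rrev, ← PNat.coe_le_coe]
  split_ifs with h
  · rw [PNat.sub_coe]
    have : (m:ℕ) < ((i+j : ℕ+):ℕ) := by rw [PNat.add_coe]; omega
    rw [if_pos (by exact_mod_cast this), PNat.add_coe]
  · rfl

lemma clone_coe (k : ℕ+) (g : ℕ+ → ℕ+) (m : ℕ+) :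
    ((clone k g m : ℕ)) = if (m:ℕ) ≤ (k:ℕ) then
      (if (g m : ℕ) ≤ (g k : ℕ) then (g m : ℕ) else (g m : ℕ) + 1)
    else (if (g (m-1) : ℕ) < (g k : ℕ) then (g (m-1) : ℕ) else (g (m-1) : ℕ) + 1) := by
  simp only [clone, ← PNat.coe_le_coe, ← PNat.coe_lt_coe]
  split_ifs <;> simp [PNat.add_coe]

/-- cloning of an interval reversal:
`ς_k(r_{i,j}) = r_{i+1,j+1}` for `k < i`; `ς_k(r_{i,j}) = r_{i,j+1} ∘ r_{k,k+1}` for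
`i ≤ k ≤ j`; and `ς_k(r_{i,j}) = r_{i,j}` for `k > j`. -/
theorem clone_rrev (i j k : ℕ+) (hij : i < j) :
    (k < i → clone k (rrev i j) = rrev (i + 1) (j + 1)) ∧
    (i ≤ k → k ≤ j → clone k (rrev i j) = rrev i (j + 1) ∘ rrev k (k + 1)) ∧
    (j < k → clone k (rrev i j) = rrev i j) := by
  rw [← PNat.coe_lt_coe] at hij
  have hi : 0 < (i:ℕ) := i.2
  have hk : 0 < (k:ℕ) := k.2
  refine ⟨fun h1 => ?_, fun h1 h2 => ?_, fun h1 => ?_⟩ <;>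
  [rw [← PNat.coe_lt_coe] at h1;
   (rw [← PNat.coe_le_coe] at h1; rw [← PNat.coe_le_coe] at h2);
   rw [← PNat.coe_lt_coe] at h1] <;>
  · funext m
    have hm : 0 < (m:ℕ) := m.2
    apply PNat.coe_injective
    by_cases hmk : (m:ℕ) ≤ (k:ℕ)
    · rw [clone_coe, if_pos hmk]
      simp only [Function.comp_apply, rrev_coe, PNat.add_coe, PNat.one_coe]
      split_ifs <;> grind
    · have h1m : ((m - 1 : ℕ+) : ℕ) = (m:ℕ) - 1 := by
        rw [PNat.sub_coe, if_pos]; · rfl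
        · rw [← PNat.coe_lt_coe]; simp only [PNat.one_coe]; omega
      rw [clone_coe, if_neg hmk]
      simp only [Function.comp_apply, rrev_coe, h1m, PNat.add_coe, PNat.one_coe]
      split_ifs <;> grind
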